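/- Let r ≥ 3 and let G be a finite simple graph on r+1 vertices with maximum degree at most r−1, such that any two vertices of degree r−1 are adjacent. Then G has at most ⌊(r+1)(3r−4)/6⌋ edges. -/

import Mathlib

theorem stmt_1 {V : Type*} [Fintype V] [DecidableEq V] (r : ℕ) (hr : 3 ≤ r)
    (hcard : Fintype.card V = r + 1)
    (G : SimpleGraph V) [DecidableRel G.Adj]
    (hmax : ∀ v : V, G.degree v ≤ r - 1)
    (hadj : ∀ u v : V, u ≠ v → G.degree u = r - 1 → G.degree v = r - 1 → G.Adj u v) :
    G.edgeFinset.card ≤ (r + 1) * (3 * r - 4) / 6 := by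
  classical
  -- degree of complement
  have hdegH : ∀ v : V, Gᶜ.degree v = r - G.degree v := by
    intro v
    rw [SimpleGraph.degree_compl]
    omega
  have hdeg1 : ∀ v : V, 1 ≤ Gᶜ.degree v := by
    intro v
    have := hmax v
    rw [hdegH v]
    omega
  -- D1 : vertices of Gᶜ-degree 1 (equivalently G-degree r-1)
  set D1 : Finset V := Finset.univ.filter (fun v => G.degree v = r - 1) with hD1
  have hmemD1 : ∀ v : V, v ∈ D1 ↔ G.degree v = r - 1 := by
    intro v; simp [hD1]
  -- vertices not in D1 have Gᶜ-degree ≥ 2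
  have hdeg2 : ∀ v : V, v ∉ D1 → 2 ≤ Gᶜ.degree v := by
    intro v hv
    rw [hmemD1] at hv
    have := hmax v
    rw [hdegH v]
    omega
  -- injection from D1 into edges of Gᶜ
  have hne : Nonempty V := by
    rw [← Fintype.card_pos_iff, hcard]; omega
  have hwspec : ∀ v : V, ∃ w : V, v ∈ D1 → Gᶜ.neighborFinset v = {w} := by
    intro v
    by_cases hv : v ∈ D1
    · have h1 : (Gᶜ.neighborFinset v).card = 1 := by
        rw [SimpleGraph.card_neighborFinset_eq_degree, hdegH v, (hmemD1 v).mp hv]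
        omega
      obtain ⟨w, hw⟩ := Finset.card_eq_one.mp h1
      exact ⟨w, fun _ => hw⟩
    · exact ⟨Classical.arbitrary V, fun h => absurd h hv⟩
  choose w hw using hwspec
  have hadjw : ∀ v ∈ D1, Gᶜ.Adj v (w v) := by
    intro v hv
    have : w v ∈ Gᶜ.neighborFinset v := by rw [hw v hv]; exact Finset.mem_singleton_self _
    exact (SimpleGraph.mem_neighborFinset Gᶜ v (w v)).mp this
  have hcardD1 : D1.card ≤ Gᶜ.edgeFinset.card := by
    apply Finset.card_le_card_of_injOn (fun v => s(v, w v))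
    · intro v hv
      simp only [Finset.mem_coe]
      rw [SimpleGraph.mem_edgeFinset, SimpleGraph.mem_edgeSet]
      exact hadjw v hv
    · intro u hu v hv huv
      simp only [Sym2.eq_iff] at huv
      rcases huv with ⟨h1, _⟩ | ⟨h1, h2⟩
      · exact h1
      · by_contra hne'
        have hGadj : G.Adj u v := hadj u v hne' ((hmemD1 u).mp hu) ((hmemD1 v).mp hv)
        have hHadj : Gᶜ.Adj u v := by
          rw [← h2]
          exact (hadjw u hu)
        rw [SimpleGraph.compl_adj] at hHadj
        exact hHadj.2 hGadj
  -- degree sum bounds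
  have hsumH : ∑ v, Gᶜ.degree v = 2 * Gᶜ.edgeFinset.card :=
    SimpleGraph.sum_degrees_eq_twice_card_edges Gᶜ
  have hsumG : ∑ v, G.degree v = 2 * G.edgeFinset.card :=
    SimpleGraph.sum_degrees_eq_twice_card_edges G
  -- total: 2eG + 2eH = (r+1)*r
  have htot : 2 * G.edgeFinset.card + 2 * Gᶜ.edgeFinset.card = (r + 1) * r := by
    rw [← hsumG, ← hsumH, ← Finset.sum_add_distrib]
    have : ∀ v : V, G.degree v + Gᶜ.degree v = r := by
      intro v
      have := hmax v
      rw [hdegH v]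
      omega
    rw [Finset.sum_congr rfl (fun v _ => this v), Finset.sum_const, Finset.card_univ, hcard,
      smul_eq_mul]
  -- lower bound on sum of Gᶜ-degrees
  have hlb : 2 * (r + 1) ≤ ∑ v, Gᶜ.degree v + D1.card := by
    have h1 : ∑ v : V, (if v ∈ D1 then 1 else 2) ≤ ∑ v, Gᶜ.degree v := by
      apply Finset.sum_le_sum
      intro v _
      by_cases hv : v ∈ D1
      · simp [hv, hdeg1 v]
      · simp [hv, hdeg2 v hv]
    have hfc : (Finset.univ.filter (fun v => v ∈ D1)).card + (Finset.univ.filter (fun v => ¬ v ∈ D1)).card = r + 1 := by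
      rw [Finset.card_filter_add_card_filter_not, Finset.card_univ, hcard]
    have hfc1 : (Finset.univ.filter (fun v => v ∈ D1)).card = D1.card := by
      simp
    have h2 : ∑ v : V, (if v ∈ D1 then 1 else 2)
        = (Finset.univ.filter (fun v => v ∈ D1)).card * 1 + (Finset.univ.filter (fun v => ¬ v ∈ D1)).card * 2 := by
      rw [Finset.sum_ite, Finset.sum_const, Finset.sum_const, smul_eq_mul, smul_eq_mul]
    omega
  -- conclude
  have hD1card : D1.card ≤ r + 1 := by
    rw [← hcard]; exact Finset.card_le_univ D1
  have h3eH : 2 * (r + 1) ≤ 3 * Gᶜ.edgeFinset.card := by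
    rw [hsumH] at hlb
    omega
  rw [Nat.le_div_iff_mul_le (by norm_num)]
  have : 3 * r - 4 + 4 = 3 * r := by omega
  nlinarith [htot, h3eH, this]
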